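/- For all n ≥ 1, 1 < (8/2^n) · Σ_{k=1}^{2^{n-1}} cos((2k-1)π/2^{n+1}). -/

import Mathlib

open Real Filter Finset

noncomputable def X (n : ℕ) : ℝ := 2 * Real.cos (Real.pi / 2 ^ (n + 1))

theorem stmt14 (n : ℕ) (hn : 1 ≤ n) :
    1 < (8 / 2 ^ n) * ∑ k ∈ Finset.range (2 ^ (n - 1)),
      Real.cos ((2 * k + 1) * Real.pi / 2 ^ (n + 1)) := by
  set θ : ℝ := Real.pi / 2 ^ (n + 1) with hθdef
  have hθpos : 0 < θ := by positivity
  have hθlt : θ < Real.pi := div_lt_self Real.pi_pos (one_lt_pow₀ one_lt_two (by omega))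
  have hsin : 0 < Real.sin θ := Real.sin_pos_of_pos_of_lt_pi hθpos hθlt
  have hterm : ∀ k : ℕ, Real.sin (2 * ((k : ℝ) + 1) * θ) - Real.sin (2 * (k : ℝ) * θ)
      = 2 * Real.sin θ * Real.cos ((2 * (k : ℝ) + 1) * θ) := by
    intro k
    rw [Real.sin_sub_sin,
      show (2 * ((k : ℝ) + 1) * θ - 2 * (k : ℝ) * θ) / 2 = θ by ring,
      show (2 * ((k : ℝ) + 1) * θ + 2 * (k : ℝ) * θ) / 2 = (2 * (k : ℝ) + 1) * θ by ring]
  have htel := Finset.sum_range_sub (fun k : ℕ => Real.sin (2 * (k : ℝ) * θ)) (2 ^ (n - 1))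
  simp only [Nat.cast_add, Nat.cast_one] at htel
  have hend : (2 : ℝ) * ((2 ^ (n - 1) : ℕ) : ℝ) * θ = Real.pi / 2 := by
    rw [hθdef]
    push_cast
    rw [show (2 : ℝ) * 2 ^ (n - 1) = 2 ^ n by
      rw [← pow_succ']; congr 1; omega]
    rw [pow_succ]
    field_simp
  have hsum : (∑ k ∈ Finset.range (2 ^ (n - 1)),
      Real.cos ((2 * (k : ℝ) + 1) * θ)) * (2 * Real.sin θ) = 1 := by
    rw [Finset.sum_mul]
    have : ∀ k ∈ Finset.range (2 ^ (n - 1)),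
        Real.cos ((2 * (k : ℝ) + 1) * θ) * (2 * Real.sin θ)
        = Real.sin (2 * ((k : ℝ) + 1) * θ) - Real.sin (2 * (k : ℝ) * θ) := by
      intro k _
      rw [hterm k]; ring
    rw [Finset.sum_congr rfl this, htel, hend]
    simp
  have hsum' : ∑ k ∈ Finset.range (2 ^ (n - 1)),
      Real.cos ((2 * (k : ℝ) + 1) * θ) = 1 / (2 * Real.sin θ) := by
    rw [eq_div_iff (by positivity)]
    linarith [hsum]
  have hgoal : (∑ k ∈ Finset.range (2 ^ (n - 1)),
      Real.cos ((2 * (k : ℝ) + 1) * Real.pi / 2 ^ (n + 1))) = 1 / (2 * Real.sin θ) := by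
    rw [← hsum']
    apply Finset.sum_congr rfl
    intro k _
    rw [hθdef]
    ring_nf
  rw [hgoal]
  have h2n : (0 : ℝ) < 2 ^ n := by positivity
  rw [show (8 / (2:ℝ) ^ n) * (1 / (2 * Real.sin θ)) = 4 / (2 ^ n * Real.sin θ) by
    field_simp; ring]
  rw [lt_div_iff₀ (by positivity)]
  have hsinlt : Real.sin θ < θ := Real.sin_lt hθpos
  have : (2:ℝ) ^ n * Real.sin θ < 2 ^ n * θ := by
    exact mul_lt_mul_of_pos_left hsinlt h2n
  have hθval : (2:ℝ) ^ n * θ = Real.pi / 2 := by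
    rw [hθdef, pow_succ]
    field_simp
  nlinarith [Real.pi_lt_d2]
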